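/- For every finite graph G and weighting w of G, there exists an induced path P in G such that N[P], the closed neighbourhood of the vertex set of P, is a w-balanced separator of G. -/
import Mathlib


open SimpleGraph

variable {V : Type}

/-- `u` and `v` are connected by a walk in `G` avoiding `S`
(i.e., they lie in the same component of `G - S`). -/
def ReachOutside (G : SimpleGraph V) (S : Set V) (u v : V) : Prop :=
  ∃ p : G.Walk u v, ∀ x ∈ p.support, x ∉ S

/-- Total weight of a vertex set. -/
noncomputable def setWeight [Finite V] (w : V → ℝ) (A : Set V) : ℝ :=
  ∑ v ∈ (Set.toFinite A).toFinset, w v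

/-- `S` is a `w`-balanced separator of `G`: every component of `G - S`
has weight at most half the total weight. -/
def IsBalancedSep [Finite V] (G : SimpleGraph V) (w : V → ℝ) (S : Set V) : Prop :=
  ∀ v, v ∉ S → setWeight w {u | ReachOutside G S u v} ≤ setWeight w (Set.univ : Set V) / 2

/-- Closed neighbourhood `N[A]` of a vertex set. -/
def closedNbhd (G : SimpleGraph V) (A : Set V) : Set V :=
  A ∪ {x | ∃ a ∈ A, G.Adj a x}

/-- `S` separates `A` from `B` in `G`: every walk from `A` to `B` meets `S`. -/
def Separates (G : SimpleGraph V) (S A B : Set V) : Prop :=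
  ∀ a ∈ A, ∀ b ∈ B, ∀ p : G.Walk a b, ∃ x ∈ p.support, x ∈ S

/-- `C` is (the vertex set of) an induced cycle of `G`: the induced subgraph is
connected and every vertex of `C` has exactly two neighbours in `C`. -/
def IsInducedCycle (G : SimpleGraph V) (C : Set V) : Prop :=
  (G.induce C).Connected ∧ ∀ x ∈ C, (G.neighborSet x ∩ C).ncard = 2

/-- `H` is an induced minor of `G`. -/
def IsInducedMinor {W : Type} (H : SimpleGraph W) (G : SimpleGraph V) : Prop :=
  ∃ X : W → Set V,
    (∀ a, (G.induce (X a)).Connected) ∧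
    (Pairwise fun a b => Disjoint (X a) (X b)) ∧
    ∀ a b, a ≠ b → ((∃ u ∈ X a, ∃ v ∈ X b, G.Adj u v) ↔ H.Adj a b)

/-- `H` is a minor of `G`. -/
def IsMinor {W : Type} (H : SimpleGraph W) (G : SimpleGraph V) : Prop :=
  ∃ X : W → Set V,
    (∀ a, (G.induce (X a)).Connected) ∧
    (Pairwise fun a b => Disjoint (X a) (X b)) ∧
    ∀ a b, H.Adj a b → ∃ u ∈ X a, ∃ v ∈ X b, G.Adj u v

/-- The `ℓ`-wheel: a cycle of length `ℓ` plus a universal vertex (`none`). -/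
def wheel (ℓ : ℕ) : SimpleGraph (Option (ZMod ℓ)) :=
  SimpleGraph.fromRel fun a b =>
    a = none ∨ b = none ∨ ∃ i : ZMod ℓ, a = some i ∧ b = some (i + 1)

/-- The `ℓ`-fan: a path on `ℓ` vertices plus a universal vertex (`none`). -/
def fan (ℓ : ℕ) : SimpleGraph (Option (Fin ℓ)) :=
  SimpleGraph.fromRel fun a b =>
    a = none ∨ b = none ∨ ∃ i j : Fin ℓ, a = some i ∧ b = some j ∧ (j : ℕ) = (i : ℕ) + 1

section
variable [Finite V] {w : V → ℝ}

lemma setWeight_nonneg (hw0 : ∀ v, 0 ≤ w v) (A : Set V) : 0 ≤ setWeight w A :=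
  Finset.sum_nonneg fun v _ => hw0 v

lemma setWeight_mono (hw0 : ∀ v, 0 ≤ w v) {A B : Set V} (h : A ⊆ B) :
    setWeight w A ≤ setWeight w B := by
  apply Finset.sum_le_sum_of_subset_of_nonneg
  · intro x hx
    simp only [Set.Finite.mem_toFinset] at *
    exact h hx
  · intro i _ _; exact hw0 i

lemma setWeight_add_le (hw0 : ∀ v, 0 ≤ w v) {A B : Set V} (h : Disjoint A B) :
    setWeight w A + setWeight w B ≤ setWeight w (Set.univ : Set V) := by
  classical
  have : setWeight w A + setWeight w B
      = ∑ v ∈ (Set.toFinite A).toFinset ∪ (Set.toFinite B).toFinset, w v := by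
    rw [Finset.sum_union]
    · rfl
    · rw [Finset.disjoint_left]
      intro x hx hx'
      simp only [Set.Finite.mem_toFinset] at *
      exact Set.disjoint_left.mp h hx hx'
  rw [this]
  apply Finset.sum_le_sum_of_subset_of_nonneg
  · intro x _; simp [setWeight]
  · intro i _ _; exact hw0 i

end

namespace ReachOutside
variable {G : SimpleGraph V} {S : Set V} {u v x : V}

lemma refl (h : v ∉ S) : ReachOutside G S v v :=
  ⟨Walk.nil, by simp [h]⟩

lemma symm (h : ReachOutside G S u v) : ReachOutside G S v u := by
  obtain ⟨p, hp⟩ := h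
  exact ⟨p.reverse, by simpa [Walk.support_reverse] using hp⟩

lemma trans (h : ReachOutside G S u v) (h' : ReachOutside G S v x) :
    ReachOutside G S u x := by
  obtain ⟨p, hp⟩ := h; obtain ⟨q, hq⟩ := h'
  refine ⟨p.append q, fun y hy => ?_⟩
  rw [Walk.mem_support_append_iff] at hy
  exact hy.elim (hp y) (hq y)

lemma left_notMem (h : ReachOutside G S u v) : u ∉ S := by
  obtain ⟨p, hp⟩ := h; exact hp u p.start_mem_support

lemma right_notMem (h : ReachOutside G S u v) : v ∉ S := by
  obtain ⟨p, hp⟩ := h; exact hp v p.end_mem_support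

lemma mono {S' : Set V} (hS : S ⊆ S') (h : ReachOutside G S' u v) : ReachOutside G S u v := by
  obtain ⟨p, hp⟩ := h; exact ⟨p, fun y hy hyS => hp y hy (hS hyS)⟩

lemma of_mem_support {p : G.Walk u v} (hp : ∀ y ∈ p.support, y ∉ S) (hx : x ∈ p.support) :
    ReachOutside G S x v := by
  classical
  refine ⟨p.dropUntil x hx, fun y hy => hp y ?_⟩
  exact Walk.support_dropUntil_subset p hx hy

lemma adj (h : ReachOutside G S u v) (h' : G.Adj x u) (hx : x ∉ S) :
    ReachOutside G S x v := by
  obtain ⟨p, hp⟩ := h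
  exact ⟨Walk.cons h' p, by
    simp only [Walk.support_cons, List.mem_cons]
    rintro y (rfl|hy) <;> [exact hx; exact hp y hy]⟩

end ReachOutside

lemma walk_boundary {G : SimpleGraph V} (S : Set V) :
    ∀ {x y : V} (q : G.Walk x y), y ∉ S →
      ReachOutside G S x y ∨
        ∃ u u', G.Adj u u' ∧ u ∈ S ∧ u ∈ q.support ∧ ReachOutside G S u' y := by
  intro x y q
  induction q with
  | nil => intro hy; exact Or.inl (ReachOutside.refl hy)
  | cons h q ih =>
    rename_i a b c
    intro hy
    rcases ih hy with hr | ⟨u, u', hadj, huS, husup, hr⟩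
    · by_cases ha : a ∈ S
      · exact Or.inr ⟨a, b, h, ha, by simp, hr⟩
      · exact Or.inl (hr.adj h ha)
    · exact Or.inr ⟨u, u', hadj, huS, by simp [husup], hr⟩

lemma closedNbhd_mono {G : SimpleGraph V} {A B : Set V} (h : A ⊆ B) :
    closedNbhd G A ⊆ closedNbhd G B := by
  rintro x (hx | ⟨a, ha, hadj⟩)
  · exact Or.inl (h hx)
  · exact Or.inr ⟨a, h ha, hadj⟩

lemma key [Finite V] (G : SimpleGraph V) (w : V → ℝ) (hw0 : ∀ v, 0 ≤ w v) (n : ℕ) :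
    ∀ (a b : V) (p : G.Walk a b) (c : V), p.IsPath →
    (∀ x ∈ p.support, ∀ y ∈ p.support, G.Adj x y → s(x, y) ∈ p.edges) →
    setWeight w (Set.univ : Set V) / 2 <
      setWeight w {u | ReachOutside G (closedNbhd G ({x | x ∈ p.support} \ {a})) u c} →
    (ReachOutside G (closedNbhd G ({x | x ∈ p.support} \ {a})) a c ∨
      ∃ u, ReachOutside G (closedNbhd G ({x | x ∈ p.support} \ {a})) u c ∧ G.Adj a u) →
    {u | ReachOutside G (closedNbhd G ({x | x ∈ p.support} \ {a})) u c}.ncard ≤ n →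
    ∃ (a' b' : V) (q : G.Walk a' b'), q.IsPath ∧
      (∀ x ∈ q.support, ∀ y ∈ q.support, G.Adj x y → s(x, y) ∈ q.edges) ∧
      IsBalancedSep G w (closedNbhd G {x | x ∈ q.support}) := by
  induction n using Nat.strong_induction_on with
  | _ n ih =>
  intro a b p c hpath hind hheavy hend hcard
  set T : Set V := closedNbhd G ({x | x ∈ p.support} \ {a}) with hT
  set S' : Set V := closedNbhd G {x | x ∈ p.support} with hS'
  by_cases hbal : IsBalancedSep G w S'
  · exact ⟨a, b, p, hpath, hind, hbal⟩
  -- extract heavy component of G - S'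
  rw [IsBalancedSep] at hbal
  push_neg at hbal
  obtain ⟨c', hc'S', hheavy'⟩ := hbal
  set C : Set V := {u | ReachOutside G T u c} with hC
  set C' : Set V := {u | ReachOutside G S' u c'} with hC'
  have hTS : T ⊆ S' := closedNbhd_mono (fun x hx => hx.1)
  -- c' is in C
  have hc'C : ReachOutside G T c' c := by
    by_contra hcc'
    have hdisj : Disjoint C {u | ReachOutside G T u c'} := by
      rw [Set.disjoint_left]
      intro z hz hz'
      exact hcc' ((hz'.symm).trans hz)
    have hsub : C' ⊆ {u | ReachOutside G T u c'} := fun x hx => hx.mono hTS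
    have h1 := setWeight_add_le (w := w) hw0 hdisj
    have h2 := setWeight_mono (w := w) hw0 hsub
    have h3 : setWeight w (Set.univ : Set V) / 2 + setWeight w (Set.univ : Set V) / 2
        ≤ setWeight w (Set.univ : Set V) := by linarith
    linarith
  have hC'subC : C' ⊆ C := fun x hx => (hx.mono hTS).trans hc'C
  -- starting point x0 ∈ S' with ReachOutside T x0 c
  obtain ⟨x0, hx0C, hx0S'⟩ :
      ∃ x0, ReachOutside G T x0 c ∧ x0 ∈ S' := by
    rcases hend with h | ⟨u, hu, hadj⟩
    · exact ⟨a, h, Or.inl p.start_mem_support⟩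
    · exact ⟨u, hu, Or.inr ⟨a, p.start_mem_support, hadj⟩⟩
  -- walk from x0 to c' avoiding T
  obtain ⟨q, hq⟩ : ReachOutside G T x0 c' := hx0C.trans hc'C.symm
  rcases walk_boundary S' q hc'S' with hr | ⟨u, u', hadj, huS', husup, hr⟩
  · exact absurd hx0S' hr.left_notMem
  have hu_notT : u ∉ T := hq u husup
  have hu_in_C : u ∈ C := (ReachOutside.of_mem_support hq husup).trans hc'C
  -- u is adjacent to a
  have hadj_au : G.Adj a u := by
    have hu_cases : u = a ∨ G.Adj a u := by
      rcases huS' with hu_sup | ⟨a', ha'sup, ha'adj⟩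
      · by_cases hua : u = a
        · exact Or.inl hua
        · exact absurd (Or.inl ⟨hu_sup, hua⟩) hu_notT
      · by_cases ha'a : a' = a
        · exact Or.inr (ha'a ▸ ha'adj)
        · exact absurd (Or.inr ⟨a', ⟨ha'sup, ha'a⟩, ha'adj⟩) hu_notT
    rcases hu_cases with rfl | h
    · -- u = a : then u' is adjacent to a so u' ∈ S', contradiction with hr
      exact absurd (Or.inr ⟨u, p.start_mem_support, hadj⟩ : u' ∈ S') hr.left_notMem
    · exact h
  have hu_notsup : u ∉ p.support := by
    intro hu_sup
    by_cases hua : u = a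
    · exact G.irrefl (hua ▸ hadj_au)
    · exact hu_notT (Or.inl ⟨hu_sup, hua⟩)
  -- new path
  set p2 : G.Walk u b := Walk.cons hadj_au.symm p with hp2
  have hpath2 : p2.IsPath := hpath.cons hu_notsup
  have hsupset : {x | x ∈ p2.support} \ {u} = {x | x ∈ p.support} := by
    ext x
    simp only [hp2, Walk.support_cons, List.mem_cons, Set.mem_diff, Set.mem_setOf_eq,
      Set.mem_singleton_iff]
    constructor
    · rintro ⟨h1 | h1, h2⟩
      · exact absurd h1 h2
      · exact h1
    · intro h1
      exact ⟨Or.inr h1, fun h2 => hu_notsup (h2 ▸ h1)⟩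
  have hind2 : ∀ x ∈ p2.support, ∀ y ∈ p2.support, G.Adj x y → s(x, y) ∈ p2.edges := by
    have hkey : ∀ y ∈ p.support, G.Adj u y → y = a := by
      intro y hy hadj'
      by_contra hya
      exact hu_notT (Or.inr ⟨y, ⟨hy, hya⟩, hadj'.symm⟩)
    intro x hx y hy hadjxy
    simp only [hp2, Walk.support_cons, List.mem_cons] at hx hy
    simp only [hp2, Walk.edges_cons, List.mem_cons]
    rcases hx with rfl | hx <;> rcases hy with rfl | hy
    · exact absurd hadjxy (G.irrefl)
    · have := hkey y hy hadjxy
      subst this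
      exact Or.inl rfl
    · have := hkey x hx hadjxy.symm
      subst this
      exact Or.inl (Sym2.eq_swap)
    · exact Or.inr (hind x hx y hy hadjxy)
  -- new component data: T₂ = S'
  have hT2 : closedNbhd G ({x | x ∈ p2.support} \ {u}) = S' := by rw [hsupset]
  -- apply induction hypothesis
  have hu_notC' : u ∉ C' := fun h => h.left_notMem huS'
  have hssub : C' ⊂ C := ⟨hC'subC, fun h => hu_notC' (h hu_in_C)⟩
  have hlt : C'.ncard < C.ncard := Set.ncard_lt_ncard hssub (Set.toFinite C)
  have hnlt : C'.ncard < n := lt_of_lt_of_le hlt hcard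
  refine ih C'.ncard hnlt u b p2 c' hpath2 hind2 ?_ ?_ ?_
  · rw [hT2]; exact hheavy'
  · rw [hT2]; exact Or.inr ⟨u', hr, hadj⟩
  · rw [hT2]

/-- Gyárfás path: some induced path has a dominating balanced
separator as its closed neighbourhood. -/
theorem gyarfas_path [Finite V] [Nonempty V] (G : SimpleGraph V)
    (w : V → ℝ) (hw0 : ∀ v, 0 ≤ w v) :
    ∃ (a b : V) (p : G.Walk a b), p.IsPath ∧
      (∀ x ∈ p.support, ∀ y ∈ p.support, G.Adj x y → s(x, y) ∈ p.edges) ∧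
      IsBalancedSep G w (closedNbhd G {x | x ∈ p.support}) := by
  classical
  have hnil : ∀ c : V, closedNbhd G ({x | x ∈ (Walk.nil : G.Walk c c).support} \ {c})
      = (∅ : Set V) := by
    intro c
    have h0 : ({x | x ∈ (Walk.nil : G.Walk c c).support} \ {c}) = (∅ : Set V) := by
      ext x; simp
    rw [h0]
    ext x
    simp [closedNbhd]
  have hnil_path : ∀ c : V, (Walk.nil : G.Walk c c).IsPath := fun c => Walk.IsPath.nil
  have hnil_ind : ∀ c : V, ∀ x ∈ (Walk.nil : G.Walk c c).support,
      ∀ y ∈ (Walk.nil : G.Walk c c).support, G.Adj x y →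
        s(x, y) ∈ (Walk.nil : G.Walk c c).edges := by
    intro c x hx y hy hadj
    simp only [Walk.support_nil, List.mem_singleton] at hx hy
    subst hx; subst hy
    exact absurd hadj (G.irrefl)
  by_cases h : ∃ c : V, setWeight w (Set.univ : Set V) / 2 <
      setWeight w {u | ReachOutside G (∅ : Set V) u c}
  · obtain ⟨c, hc⟩ := h
    refine key G w hw0
      {u | ReachOutside G (closedNbhd G ({x | x ∈ (Walk.nil : G.Walk c c).support} \ {c})) u c}.ncard
      c c Walk.nil c (hnil_path c) (hnil_ind c) ?_ ?_ le_rfl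
    · rw [hnil c]; exact hc
    · rw [hnil c]
      exact Or.inl (ReachOutside.refl (Set.notMem_empty c))
  · push_neg at h
    set c := Classical.arbitrary V
    refine ⟨c, c, Walk.nil, hnil_path c, hnil_ind c, ?_⟩
    intro v hv
    refine le_trans (setWeight_mono hw0 ?_) (h v)
    intro x hx
    exact hx.mono (Set.empty_subset _)
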